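/- In the two-level least squares setting with the given QR decompositions, det A = ( (product of the diagonal entries of R) · ∏_{i=1}^m (product of the diagonal entries of Rᵢ) )². -/

import Mathlib

open Matrix

/-- The two-level least-squares design matrix with row blocks
`[Bᵢ | 0 … B̊ᵢ … 0]`; the rows of block `i` are indexed by `Fin q ⊕ Fin (k i)`
(so that `nᵢ = q + k i ≥ q`). -/
def twoLevelB {p q m : ℕ} {k : Fin m → ℕ}
    (B1 : (i : Fin m) → Matrix (Fin q ⊕ Fin (k i)) (Fin p) ℝ)
    (B2 : (i : Fin m) → Matrix (Fin q ⊕ Fin (k i)) (Fin q) ℝ) :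
    Matrix ((i : Fin m) × (Fin q ⊕ Fin (k i))) (Fin p ⊕ Fin m × Fin q) ℝ :=
  Matrix.of fun x y =>
    match y with
    | Sum.inl a => B1 x.1 x.2 a
    | Sum.inr (i, b) => if x.1 = i then B2 x.1 x.2 b else 0

/-- `C₀ᵢ := Qᵢᵀ Bᵢ`. -/
def C0 {p q m : ℕ} {k : Fin m → ℕ}
    (Q1 : (i : Fin m) → Matrix (Fin q ⊕ Fin (k i)) (Fin q ⊕ Fin (k i)) ℝ)
    (B1 : (i : Fin m) → Matrix (Fin q ⊕ Fin (k i)) (Fin p) ℝ)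
    (i : Fin m) : Matrix (Fin q ⊕ Fin (k i)) (Fin p) ℝ :=
  (Q1 i)ᵀ * B1 i

/-- `C₁ᵢ`: the first `q` rows of `C₀ᵢ`. -/
def C1 {p q m : ℕ} {k : Fin m → ℕ}
    (Q1 : (i : Fin m) → Matrix (Fin q ⊕ Fin (k i)) (Fin q ⊕ Fin (k i)) ℝ)
    (B1 : (i : Fin m) → Matrix (Fin q ⊕ Fin (k i)) (Fin p) ℝ)
    (i : Fin m) : Matrix (Fin q) (Fin p) ℝ :=
  (C0 Q1 B1 i).submatrix Sum.inl id

/-- `C₂ᵢ`: the remaining `nᵢ − q` rows of `C₀ᵢ`. -/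
def C2 {p q m : ℕ} {k : Fin m → ℕ}
    (Q1 : (i : Fin m) → Matrix (Fin q ⊕ Fin (k i)) (Fin q ⊕ Fin (k i)) ℝ)
    (B1 : (i : Fin m) → Matrix (Fin q ⊕ Fin (k i)) (Fin p) ℝ)
    (i : Fin m) : Matrix (Fin (k i)) (Fin p) ℝ :=
  (C0 Q1 B1 i).submatrix Sum.inr id

/-- The row-stack of `C₂₁, …, C₂ₘ`. -/
def stackC2 {p q m : ℕ} {k : Fin m → ℕ}
    (Q1 : (i : Fin m) → Matrix (Fin q ⊕ Fin (k i)) (Fin q ⊕ Fin (k i)) ℝ)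
    (B1 : (i : Fin m) → Matrix (Fin q ⊕ Fin (k i)) (Fin p) ℝ) :
    Matrix ((i : Fin m) × Fin (k i)) (Fin p) ℝ :=
  Matrix.of fun x a => C2 Q1 B1 x.1 x.2 a


section Aux

variable {p q m : ℕ} {k : Fin m → ℕ}

lemma C0_eq_fromRows (Q1 : (i : Fin m) → Matrix (Fin q ⊕ Fin (k i)) (Fin q ⊕ Fin (k i)) ℝ)
    (B1 : (i : Fin m) → Matrix (Fin q ⊕ Fin (k i)) (Fin p) ℝ) (i : Fin m) :
    C0 Q1 B1 i = Matrix.fromRows (C1 Q1 B1 i) (C2 Q1 B1 i) := by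
  ext (b | b) a <;> rfl

/-- The lower-left block `C₁` stacked as an `(m·q) × p` matrix. -/
def auxC (Q1 : (i : Fin m) → Matrix (Fin q ⊕ Fin (k i)) (Fin q ⊕ Fin (k i)) ℝ)
    (B1 : (i : Fin m) → Matrix (Fin q ⊕ Fin (k i)) (Fin p) ℝ) :
    Matrix (Fin m × Fin q) (Fin p) ℝ :=
  Matrix.of fun x a => C1 Q1 B1 x.1 x.2 a

/-- Block diagonal of the `R1 i`. -/
def auxD (R1 : Fin m → Matrix (Fin q) (Fin q) ℝ) :
    Matrix (Fin m × Fin q) (Fin m × Fin q) ℝ :=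
  Matrix.of fun x y => if x.1 = y.1 then R1 x.1 x.2 y.2 else 0

/-- The square "triangular" factor. -/
def auxS (Q1 : (i : Fin m) → Matrix (Fin q ⊕ Fin (k i)) (Fin q ⊕ Fin (k i)) ℝ)
    (B1 : (i : Fin m) → Matrix (Fin q ⊕ Fin (k i)) (Fin p) ℝ)
    (R : Matrix (Fin p) (Fin p) ℝ) (R1 : Fin m → Matrix (Fin q) (Fin q) ℝ) :
    Matrix (Fin p ⊕ Fin m × Fin q) (Fin p ⊕ Fin m × Fin q) ℝ :=
  Matrix.fromBlocks R 0 (auxC Q1 B1) (auxD R1)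

end Aux

theorem twoLevelLS_det {p q m s : ℕ} {k : Fin m → ℕ}
    (hp : 0 < p) (hq : 0 < q) (hm : 0 < m)
    (B1 : (i : Fin m) → Matrix (Fin q ⊕ Fin (k i)) (Fin p) ℝ)
    (B2 : (i : Fin m) → Matrix (Fin q ⊕ Fin (k i)) (Fin q) ℝ)
    (hrank : (twoLevelB B1 B2).rank = p + m * q)
    (Q1 : (i : Fin m) → Matrix (Fin q ⊕ Fin (k i)) (Fin q ⊕ Fin (k i)) ℝ)
    (hQ1 : ∀ i, (Q1 i)ᵀ * Q1 i = 1) (hQ1' : ∀ i, Q1 i * (Q1 i)ᵀ = 1)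
    (R1 : (i : Fin m) → Matrix (Fin q) (Fin q) ℝ)
    (hR1tri : ∀ i, (R1 i).BlockTriangular id)
    (hR1 : ∀ i, IsUnit (R1 i).det)
    (hQR1 : ∀ i, B2 i = Q1 i * Matrix.fromRows (R1 i) 0)
    (Q : Matrix ((i : Fin m) × Fin (k i)) (Fin p ⊕ Fin s) ℝ)
    (hQ : Qᵀ * Q = 1) (hQ' : Q * Qᵀ = 1)
    (R : Matrix (Fin p) (Fin p) ℝ)
    (hRtri : R.BlockTriangular id) (hR : IsUnit R.det)
    (hQR : stackC2 Q1 B1 = Q * Matrix.fromRows R 0)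
    :
    ((twoLevelB B1 B2)ᵀ * twoLevelB B1 B2).det =
      ((∏ a, R a a) * ∏ i, ∏ b, R1 i b b) ^ 2 := by
  classical
  -- Block identities
  have hC0mul : ∀ i, (C0 Q1 B1 i)ᵀ * C0 Q1 B1 i = (B1 i)ᵀ * B1 i := by
    intro i
    unfold C0
    rw [Matrix.transpose_mul, Matrix.transpose_transpose, Matrix.mul_assoc,
      ← Matrix.mul_assoc (Q1 i), hQ1' i, Matrix.one_mul]
  have hsplit : ∀ i, (C0 Q1 B1 i)ᵀ * C0 Q1 B1 i =
      (C1 Q1 B1 i)ᵀ * C1 Q1 B1 i + (C2 Q1 B1 i)ᵀ * C2 Q1 B1 i := by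
    intro i
    rw [C0_eq_fromRows, Matrix.transpose_fromRows, Matrix.fromCols_mul_fromRows]
  have hL2 : (stackC2 Q1 B1)ᵀ * stackC2 Q1 B1 = Rᵀ * R := by
    rw [show stackC2 Q1 B1 = @HMul.hMul _ _ _ Matrix.instHMulOfFintypeOfMulOfAddCommMonoid Q (Matrix.fromRows R 0) from hQR, Matrix.transpose_mul, Matrix.mul_assoc, ← Matrix.mul_assoc Qᵀ,
      hQ, Matrix.one_mul, Matrix.transpose_fromRows, Matrix.fromCols_mul_fromRows]
    simp
  have hL3 : ∀ i, (B1 i)ᵀ * B2 i = (C1 Q1 B1 i)ᵀ * R1 i := by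
    intro i
    have h1 : (B1 i)ᵀ * B2 i = (C0 Q1 B1 i)ᵀ * Matrix.fromRows (R1 i) 0 := by
      rw [show B2 i = @HMul.hMul _ _ _ Matrix.instHMulOfFintypeOfMulOfAddCommMonoid (Q1 i) (Matrix.fromRows (R1 i) 0) from hQR1 i, C0, Matrix.transpose_mul, Matrix.transpose_transpose]
      exact (Matrix.mul_assoc _ _ _).symm
    rw [h1, C0_eq_fromRows, Matrix.transpose_fromRows]
    exact (Matrix.fromCols_mul_fromRows _ _ _ _).trans (by rw [Matrix.mul_zero, add_zero])
  have hL4 : ∀ i, (B2 i)ᵀ * B2 i = (R1 i)ᵀ * R1 i := by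
    intro i
    rw [show B2 i = @HMul.hMul _ _ _ Matrix.instHMulOfFintypeOfMulOfAddCommMonoid (Q1 i) (Matrix.fromRows (R1 i) 0) from hQR1 i, Matrix.transpose_mul, Matrix.mul_assoc, ← Matrix.mul_assoc (Q1 i)ᵀ,
      hQ1 i, Matrix.one_mul, Matrix.transpose_fromRows, Matrix.fromCols_mul_fromRows]
    simp
  -- Entry-level consequences
  have E1 : ∀ i a a', (∑ x, B1 i x a * B1 i x a') =
      (∑ b, C1 Q1 B1 i b a * C1 Q1 B1 i b a') + ∑ x, C2 Q1 B1 i x a * C2 Q1 B1 i x a' := by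
    intro i a a'
    have h := ((hC0mul i).symm.trans (hsplit i))
    have h2 := congrFun (congrFun h a) a'
    simpa [Matrix.mul_apply, Matrix.add_apply] using h2
  have E2 : ∀ a a', (∑ i, ∑ x, C2 Q1 B1 i x a * C2 Q1 B1 i x a') = ∑ t, R t a * R t a' := by
    intro a a'
    have h2 := congrFun (congrFun hL2 a) a'
    simp only [Matrix.mul_apply, Matrix.transpose_apply, stackC2, Matrix.of_apply] at h2
    rw [← Finset.univ_sigma_univ, Finset.sum_sigma] at h2
    exact h2
  have E3 : ∀ i a c, (∑ x, B1 i x a * B2 i x c) = ∑ b, C1 Q1 B1 i b a * R1 i b c := by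
    intro i a c
    have h2 := congrFun (congrFun (hL3 i) a) c
    simpa [Matrix.mul_apply] using h2
  have E4 : ∀ i b c, (∑ x, B2 i x b * B2 i x c) = ∑ d, R1 i d b * R1 i d c := by
    intro i b c
    have h2 := congrFun (congrFun (hL4 i) b) c
    simpa [Matrix.mul_apply] using h2
  -- Main factorization
  have key : (twoLevelB B1 B2)ᵀ * twoLevelB B1 B2 =
      (auxS Q1 B1 R R1)ᵀ * auxS Q1 B1 R R1 := by
    ext y z
    simp only [Matrix.mul_apply, Matrix.transpose_apply]
    rw [← Finset.univ_sigma_univ, Finset.sum_sigma, Fintype.sum_sum_type,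
      Fintype.sum_prod_type]
    rcases y with a | ⟨i, b⟩ <;> rcases z with a' | ⟨j, c⟩
    · -- (inl, inl)
      simp only [twoLevelB, auxS, auxC, Matrix.of_apply, Matrix.fromBlocks_apply₁₁,
        Matrix.fromBlocks_apply₂₁]
      calc (∑ i, ∑ x, B1 i x a * B1 i x a')
          = ∑ i, ((∑ b, C1 Q1 B1 i b a * C1 Q1 B1 i b a') +
              ∑ x, C2 Q1 B1 i x a * C2 Q1 B1 i x a') :=
            Finset.sum_congr rfl fun i _ => E1 i a a'
        _ = (∑ i, ∑ b, C1 Q1 B1 i b a * C1 Q1 B1 i b a') +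
              ∑ i, ∑ x, C2 Q1 B1 i x a * C2 Q1 B1 i x a' := Finset.sum_add_distrib
        _ = (∑ t, R t a * R t a') + ∑ i, ∑ b, C1 Q1 B1 i b a * C1 Q1 B1 i b a' := by
            rw [E2 a a']; ring
    · -- (inl, inr)
      simp only [twoLevelB, auxS, auxC, auxD, Matrix.of_apply, Matrix.fromBlocks_apply₁₁,
        Matrix.fromBlocks_apply₂₁, Matrix.fromBlocks_apply₁₂, Matrix.fromBlocks_apply₂₂,
        mul_ite, mul_zero, ite_mul, zero_mul, Matrix.zero_apply]
      have h1 : ∀ l : Fin m, (∑ x, if l = j then B1 l x a * B2 l x c else 0) =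
          ∑ d : Fin q, if l = j then C1 Q1 B1 l d a * R1 l d c else 0 := by
        intro l
        rcases eq_or_ne l j with rfl | hl
        · simpa using E3 l a c
        · simp [hl]
      rw [Finset.sum_congr rfl fun l _ => h1 l]
      simp
    · -- (inr, inl)
      simp only [twoLevelB, auxS, auxC, auxD, Matrix.of_apply, Matrix.fromBlocks_apply₁₁,
        Matrix.fromBlocks_apply₂₁, Matrix.fromBlocks_apply₁₂, Matrix.fromBlocks_apply₂₂,
        mul_ite, mul_zero, ite_mul, zero_mul, Matrix.zero_apply]
      have h1 : ∀ l : Fin m, (∑ x, if l = i then B2 l x b * B1 l x a' else 0) =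
          ∑ d : Fin q, if l = i then R1 l d b * C1 Q1 B1 l d a' else 0 := by
        intro l
        rcases eq_or_ne l i with rfl | hl
        · have : (∑ x, B2 l x b * B1 l x a') = ∑ d, R1 l d b * C1 Q1 B1 l d a' := by
            rw [Finset.sum_congr rfl fun x _ => mul_comm (B2 l x b) (B1 l x a'), E3 l a' b]
            exact Finset.sum_congr rfl fun d _ => mul_comm _ _
          simpa using this
        · simp [hl]
      rw [Finset.sum_congr rfl fun l _ => h1 l]
      simp
    · -- (inr, inr)
      simp only [twoLevelB, auxS, auxC, auxD, Matrix.of_apply, Matrix.fromBlocks_apply₁₁,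
        Matrix.fromBlocks_apply₂₁, Matrix.fromBlocks_apply₁₂, Matrix.fromBlocks_apply₂₂,
        mul_ite, mul_zero, ite_mul, zero_mul, Matrix.zero_apply]
      have h1 : ∀ l : Fin m, (∑ x, if l = j then if l = i then B2 l x b * B2 l x c else 0 else 0) =
          ∑ d : Fin q, if l = j then if l = i then R1 l d b * R1 l d c else 0 else 0 := by
        intro l
        rcases eq_or_ne l j with rfl | hl
        · rcases eq_or_ne l i with rfl | hlj
          · simpa using E4 l b c
          · simp [hlj]
        · simp [hl]
      rw [Finset.sum_congr rfl fun l _ => h1 l]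
      simp
  -- Determinant computation
  rw [key, Matrix.det_mul, Matrix.det_transpose]
  have hdetS : (auxS Q1 B1 R R1).det = (∏ a, R a a) * ∏ i, ∏ b, R1 i b b := by
    rw [auxS, Matrix.det_fromBlocks_zero₁₂, Matrix.det_of_upperTriangular hRtri]
    congr 1
    have hDeq : auxD R1 = (Matrix.blockDiagonal R1).submatrix
        (Equiv.prodComm (Fin m) (Fin q)) (Equiv.prodComm (Fin m) (Fin q)) := by
      ext ⟨i, b⟩ ⟨j, c⟩
      simp [auxD, Matrix.blockDiagonal_apply]
    rw [hDeq, Matrix.det_submatrix_equiv_self, Matrix.det_blockDiagonal]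
    exact Finset.prod_congr rfl fun i _ => Matrix.det_of_upperTriangular (hR1tri i)
  rw [hdetS, pow_two]
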